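/- Let G be an abelian group, let g ≥ 1 and m ≥ 1 be natural numbers, and let T be a subset of G. Suppose: (i) for every x ∈ G the set {η ∈ G : 2η = 0 and x + η ∈ T} has at most 4^g − 3^g elements; (ii) the 2m-torsion subgroup {a ∈ G : (2m)·a = 0} is finite of cardinality (2m)^(2g); (iii) the 2-torsion subgroup {a ∈ G : 2a = 0} has cardinality 2^(2g). Then the set {a ∈ G : (2m)·a = 0 and a ∈ T} has at most m^(2g) · (4^g − 3^g) elements. -/

import Mathlib

/-- Group-theoretic content of Corollary 4.2 of the paper:
`Θ(2m) ≤ m^(2g) · (4^g − 3^g)`. -/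
theorem stmt1 {G : Type*} [AddCommGroup G] (g m : ℕ) (hg : 1 ≤ g) (hm : 1 ≤ m)
    (T : Set G)
    (h2 : ∀ x : G, {η : G | 2 • η = 0 ∧ x + η ∈ T}.Finite ∧
      {η : G | 2 • η = 0 ∧ x + η ∈ T}.ncard ≤ 4 ^ g - 3 ^ g)
    (hfin : {a : G | (2 * m) • a = 0}.Finite)
    (hcard2m : {a : G | (2 * m) • a = 0}.ncard = (2 * m) ^ (2 * g))
    (hcard2 : {a : G | 2 • a = 0}.ncard = 2 ^ (2 * g)) :
    {a : G | (2 * m) • a = 0 ∧ a ∈ T}.ncard ≤ m ^ (2 * g) * (4 ^ g - 3 ^ g) := by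
  classical
  -- the 2-torsion subgroup
  set H : AddSubgroup G :=
    { carrier := {a : G | 2 • a = 0}
      zero_mem' := by simp
      add_mem' := fun {a b} ha hb => by
        simp only [Set.mem_setOf_eq] at *
        rw [smul_add, ha, hb, add_zero]
      neg_mem' := fun {a} ha => by
        simp only [Set.mem_setOf_eq] at *
        rw [smul_neg, ha, neg_zero] } with hH
  have h2to2m : ∀ a : G, 2 • a = 0 → (2 * m) • a = 0 := by
    intro a ha
    rw [mul_comm, mul_smul, ha, smul_zero]
  have h2fin : ({a : G | 2 • a = 0} : Set G).Finite :=
    hfin.subset (fun a ha => h2to2m a ha)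
  set f : G → G ⧸ H := QuotientAddGroup.mk with hf
  set N : Finset G := hfin.toFinset with hNdef
  set S : Finset G := N.filter (· ∈ T) with hSdef
  have hNcard : N.card = (2 * m) ^ (2 * g) := by
    rw [← hcard2m, Set.ncard_eq_toFinset_card _ hfin]
  have hSetS : {a : G | (2 * m) • a = 0 ∧ a ∈ T} = ↑S := by
    ext a
    simp [hSdef, hNdef, Set.Finite.mem_toFinset]
  rw [hSetS, Set.ncard_coe_finset]
  -- each fiber of f on S has at most 4^g - 3^g elements
  have hfiber : ∀ y ∈ S.image f, (S.filter fun a => f a = y).card ≤ 4 ^ g - 3 ^ g := by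
    intro y hy
    obtain ⟨x, hxS, hxy⟩ := Finset.mem_image.mp hy
    have hsub : (S.filter fun a => f a = y).card ≤ ((h2 x).1.toFinset).card := by
      apply Finset.card_le_card_of_injOn (fun a => a - x)
      · intro a ha
        simp only [Finset.mem_coe, Finset.mem_filter] at ha
        obtain ⟨haS, hfa⟩ := ha
        rw [Finset.mem_coe, Set.Finite.mem_toFinset]
        have hmem : a - x ∈ H := by
          have : f a = f x := by rw [hfa, hxy]
          have := (QuotientAddGroup.eq (s := H)).mp this.symm
          -- -x + a ∈ H
          simpa [sub_eq_neg_add] using this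
        have h2ax : 2 • (a - x) = 0 := hmem
        refine ⟨h2ax, ?_⟩
        have : x + (a - x) = a := by abel
        rw [this]
        simp only [hSdef, Finset.mem_filter] at haS
        exact haS.2
      · intro a _ b _ hab
        exact sub_left_injective hab
    calc (S.filter fun a => f a = y).card ≤ ((h2 x).1.toFinset).card := hsub
      _ = {η : G | 2 • η = 0 ∧ x + η ∈ T}.ncard :=
        (Set.ncard_eq_toFinset_card _ (h2 x).1).symm
      _ ≤ 4 ^ g - 3 ^ g := (h2 x).2
  have hstep1 : S.card ≤ (4 ^ g - 3 ^ g) * (S.image f).card :=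
    Finset.card_le_mul_card_image S _ hfiber
  -- each fiber of f on N has at least 2^(2g) elements
  have hfiberN : ∀ y ∈ N.image f, 2 ^ (2 * g) ≤ (N.filter fun a => f a = y).card := by
    intro y hy
    obtain ⟨x, hxN, hxy⟩ := Finset.mem_image.mp hy
    have : (h2fin.toFinset).card ≤ (N.filter fun a => f a = y).card := by
      apply Finset.card_le_card_of_injOn (fun η => x + η)
      · intro η hη
        rw [Finset.mem_coe, Set.Finite.mem_toFinset] at hη
        have hηH : η ∈ H := hη
        refine Finset.mem_filter.mpr ⟨?_, ?_⟩
        · rw [hNdef, Set.Finite.mem_toFinset]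
          have hx : (2 * m) • x = 0 := (Set.Finite.mem_toFinset hfin).mp hxN
          show (2 * m) • (x + η) = 0
          rw [smul_add, hx, h2to2m η hη, add_zero]
        · rw [← hxy]
          show QuotientAddGroup.mk (x + η) = QuotientAddGroup.mk x
          rw [QuotientAddGroup.eq]
          have : -(x + η) + x = -η := by abel
          rw [this]
          exact H.neg_mem hηH
      · intro a _ b _ hab
        exact add_left_cancel hab
    calc (2 : ℕ) ^ (2 * g) = {a : G | 2 • a = 0}.ncard := hcard2.symm
      _ = (h2fin.toFinset).card := Set.ncard_eq_toFinset_card _ h2fin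
      _ ≤ _ := this
  have hstep2 : 2 ^ (2 * g) * (N.image f).card ≤ N.card :=
    Finset.mul_card_image_le_card N _ hfiberN
  have himage : (N.image f).card ≤ m ^ (2 * g) := by
    have h2m : N.card = 2 ^ (2 * g) * m ^ (2 * g) := by
      rw [hNcard, mul_pow]
    rw [h2m] at hstep2
    exact Nat.le_of_mul_le_mul_left hstep2 (Nat.pow_pos (by norm_num))
  have hSN : (S.image f).card ≤ (N.image f).card :=
    Finset.card_le_card (Finset.image_subset_image (Finset.filter_subset _ _))
  calc S.card ≤ (4 ^ g - 3 ^ g) * (S.image f).card := hstep1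
    _ ≤ (4 ^ g - 3 ^ g) * m ^ (2 * g) := by
        exact Nat.mul_le_mul_left _ (hSN.trans himage)
    _ = m ^ (2 * g) * (4 ^ g - 3 ^ g) := mul_comm _ _
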